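/- For all κ ≥ 0 and k ≥ 0, J_g(κ, k) = J_g(k, κ). -/

import Mathlib

open MeasureTheory Set ENNReal

/-- `IsACgen f g` expresses that `f` is absolutely continuous on `[0,1]` with `f 0 = 0`:
`g` is its (integrable) derivative and `f t = ∫₀ᵗ g(s) ds` on `[0,1]`. -/
def IsACgen (f g : ℝ → ℝ) : Prop :=
  IntervalIntegrable g volume 0 1 ∧
  ∀ t ∈ Icc (0:ℝ) 1, f t = ∫ s in (0:ℝ)..t, g s

/-- The (extended-real-valued) energy `(1/2)∫₀¹ (f'(t))² dt` of a path with
derivative `g`. -/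
noncomputable def energyE (g : ℝ → ℝ) : ℝ≥0∞ :=
  (1 / 2 : ℝ≥0∞) * ∫⁻ t in Ioc (0:ℝ) 1, ENNReal.ofReal ((g t) ^ 2)

/-- The rate function `J_g(κ, k)` for generalized Asian options in the Black-Scholes
model: the infimum of `(1/2)∫₀¹ (f'(t))² dt` over absolutely continuous `f` with
`f(0) = 0` and `∫₀¹ exp(f(t)) dt = κ·exp(f(1)) + k`; by the `ℝ≥0∞`-convention the
infimum of the empty set is `+∞`. -/
noncomputable def Jg (κ k : ℝ) : ℝ≥0∞ :=
  sInf { E | ∃ f g : ℝ → ℝ, IsACgen f g ∧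
    (∫ t in (0:ℝ)..1, Real.exp (f t)) = κ * Real.exp (f 1) + k ∧ E = energyE g }

/-- Time reversal `g ↦ (t ↦ -g(1-t))` preserves the energy. -/
lemma energyE_flip (g : ℝ → ℝ) : energyE (fun t => -g (1 - t)) = energyE g := by
  unfold energyE
  congr 1
  have hmp : MeasurePreserving (fun t : ℝ => 1 - t) volume volume :=
    Measure.measurePreserving_sub_left volume 1
  have hemb : MeasurableEmbedding (fun t : ℝ => 1 - t) :=
    (MeasurableEquiv.subLeft (1:ℝ)).measurableEmbedding
  have h1 : (∫⁻ t in Ioc (0:ℝ) 1, ENNReal.ofReal ((-g (1 - t)) ^ 2))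
      = ∫⁻ t in (fun t : ℝ => 1 - t) '' Ioc (0:ℝ) 1, ENNReal.ofReal ((g t) ^ 2) := by
    rw [← hmp.setLIntegral_comp_emb hemb (fun t => ENNReal.ofReal ((g t) ^ 2)) (Ioc 0 1)]
    simp [neg_pow]
  have h2 : (fun t : ℝ => 1 - t) '' Ioc (0:ℝ) 1 = Ico (0:ℝ) 1 := by
    rw [Set.image_const_sub_Ioc]; norm_num
  rw [h1, h2]
  exact setLIntegral_congr Ico_ae_eq_Ioc

/-- Time reversal maps the admissible set for `(κ, k)` into the one for `(k, κ)`,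
with the same energy. -/
lemma mem_flip {κ k : ℝ} {E : ℝ≥0∞}
    (h : E ∈ { E | ∃ f g : ℝ → ℝ, IsACgen f g ∧
      (∫ t in (0:ℝ)..1, Real.exp (f t)) = κ * Real.exp (f 1) + k ∧ E = energyE g }) :
    E ∈ { E | ∃ f g : ℝ → ℝ, IsACgen f g ∧
      (∫ t in (0:ℝ)..1, Real.exp (f t)) = k * Real.exp (f 1) + κ ∧ E = energyE g } := by
  obtain ⟨f, g, ⟨hgI, hfg⟩, hcon, hE⟩ := h
  have hf0 : f 0 = 0 := by
    have := hfg 0 ⟨le_rfl, zero_le_one⟩; simpa using this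
  refine ⟨fun t => f (1 - t) - f 1, fun t => -g (1 - t), ⟨?_, ?_⟩, ?_, ?_⟩
  · have := (hgI.comp_sub_left 1).neg
    have h2 : IntervalIntegrable (-fun x => g (1 - x)) volume 0 1 := by simpa using this.symm
    exact h2
  · intro t ht
    have h1t : (1 - t) ∈ Icc (0:ℝ) 1 := ⟨by linarith [ht.2], by linarith [ht.1]⟩
    have hsub : IntervalIntegrable g volume (1 - t) 1 :=
      hgI.mono_set (by
        rw [Set.uIcc_of_le (show (1:ℝ) - t ≤ 1 by linarith [ht.1]),
          Set.uIcc_of_le zero_le_one]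
        exact Set.Icc_subset_Icc h1t.1 le_rfl)
    have hsub0 : IntervalIntegrable g volume 0 (1 - t) :=
      hgI.mono_set (by
        rw [Set.uIcc_of_le h1t.1, Set.uIcc_of_le zero_le_one]
        exact Set.Icc_subset_Icc le_rfl h1t.2)
    have hadj : (∫ s in (0:ℝ)..(1-t), g s) + ∫ s in (1-t)..1, g s = ∫ s in (0:ℝ)..1, g s :=
      intervalIntegral.integral_add_adjacent_intervals hsub0 hsub
    have hcomp : (∫ s in (0:ℝ)..t, -g (1 - s)) = -∫ s in (1-t)..1, g s := by
      rw [intervalIntegral.integral_neg, intervalIntegral.integral_comp_sub_left g 1]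
      norm_num
    show f (1 - t) - f 1 = ∫ s in (0:ℝ)..t, -g (1 - s)
    rw [hcomp, hfg _ h1t, hfg 1 ⟨zero_le_one, le_rfl⟩, ← hadj]
    ring
  · show (∫ t in (0:ℝ)..1, Real.exp (f (1 - t) - f 1))
      = k * Real.exp (f (1 - 1) - f 1) + κ
    have hflip : (∫ t in (0:ℝ)..1, Real.exp (f (1 - t) - f 1))
        = (∫ t in (0:ℝ)..1, Real.exp (f t)) * Real.exp (-f 1) := by
      have he : ∀ t : ℝ, Real.exp (f (1 - t) - f 1)
          = Real.exp (f (1 - t)) * Real.exp (-f 1) := by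
        intro t; rw [← Real.exp_add]; ring_nf
      simp_rw [he]
      rw [intervalIntegral.integral_mul_const,
        intervalIntegral.integral_comp_sub_left (fun u => Real.exp (f u)) 1]
      norm_num
    rw [hflip, hcon]
    norm_num [hf0, Real.exp_neg]
    have hpos := Real.exp_pos (f 1)
    field_simp
    ring
  · rw [hE, energyE_flip]

/-- For all `κ ≥ 0` and `k ≥ 0`, `J_g(κ, k) = J_g(k, κ)`. -/
theorem Jg_symm (κ k : ℝ) (hκ : 0 ≤ κ) (hk : 0 ≤ k) : Jg κ k = Jg k κ := by
  unfold Jg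
  exact le_antisymm (sInf_le_sInf fun E hE => mem_flip hE)
    (sInf_le_sInf fun E hE => mem_flip hE)
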